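/- arXiv:1511.03490 — 3 statements merged into one kernel-verified Lean document; each statement's English description precedes it below -/
import Mathlib

section
/- The truncated version of the star/non-star decomposition holds as an identity of finite sums: for any N ≥ 0, Σ_{N ≥ i_r ≥ ⋯ ≥ i_1 ≥ 0} a_1(i_1)⋯a_r(i_r) = Σ_{ℓ=2}^{r} (−1)^ℓ (Σ_{N ≥ i_1 > ⋯ > i_{ℓ−1} ≥ 0} a_1(i_1)⋯a_{ℓ−1}(i_{ℓ−1})) · (Σ_{N ≥ i_r ≥ ⋯ ≥ i_ℓ ≥ 0} a_ℓ(i_ℓ)⋯a_r(i_r)) + (−1)^{r+1} Σ_{N ≥ i_1 > ⋯ > i_r ≥ 0} a_1(i_1)⋯a_r(i_r), for arbitrary functions a_1,…,a_r from {0,…,N} to a commutative ring. -/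
open scoped Classical

/-- Sum over strictly decreasing tuples `N ≥ i_1 > ⋯ > i_m ≥ 0` of
`a_off(i_1)⋯a_{off+m-1}(i_m)` (here `j = 0` corresponds to `i_1`). -/
noncomputable def strictSum {R : Type*} [CommRing R] (N m off : ℕ) (a : ℕ → ℕ → R) : R :=
  ∑ i ∈ Finset.univ.filter
      (fun i : Fin m → Fin (N + 1) => ∀ j k : Fin m, j < k → (i k : ℕ) < (i j : ℕ)),
    ∏ j : Fin m, a (off + (j : ℕ)) ((i j : ℕ))

/-- Sum over weakly increasing tuples `0 ≤ i_1 ≤ ⋯ ≤ i_m ≤ N` of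
`a_off(i_1)⋯a_{off+m-1}(i_m)` (here `j = 0` corresponds to `i_1`). -/
noncomputable def weakSum {R : Type*} [CommRing R] (N m off : ℕ) (a : ℕ → ℕ → R) : R :=
  ∑ i ∈ Finset.univ.filter (fun i : Fin m → Fin (N + 1) => Monotone i),
    ∏ j : Fin m, a (off + (j : ℕ)) ((i j : ℕ))

/-! ### Auxiliary machinery -/

/-- The combined predicate: strictly decreasing on the first `m` coordinates, weakly
increasing from coordinate `m` on. -/
def Pm {N r : ℕ} (m : ℕ) (t : Fin r → Fin (N + 1)) : Prop :=
  (∀ j k : Fin r, (k : ℕ) < m → j < k → (t k : ℕ) < (t j : ℕ)) ∧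
  (∀ j k : Fin r, m ≤ (j : ℕ) → j ≤ k → (t j : ℕ) ≤ (t k : ℕ))

noncomputable def Tm {R : Type*} [CommRing R] (N r m : ℕ) (a : ℕ → ℕ → R) : R :=
  ∑ t ∈ Finset.univ.filter (fun t : Fin r → Fin (N + 1) => Pm m t),
    ∏ j : Fin r, a (1 + (j : ℕ)) ((t j : ℕ))

lemma append_apply_lt {α : Type*} {m u : ℕ} (x : Fin m → α) (y : Fin u → α)
    (k : Fin (m + u)) (h : (k : ℕ) < m) : Fin.append x y k = x ⟨(k : ℕ), h⟩ := by
  have hk : Fin.castAdd u ⟨(k : ℕ), h⟩ = k := by ext; simp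
  have h2 := Fin.append_left x y ⟨(k : ℕ), h⟩
  rw [hk] at h2
  exact h2

lemma append_apply_ge {α : Type*} {m u : ℕ} (x : Fin m → α) (y : Fin u → α)
    (k : Fin (m + u)) (h : m ≤ (k : ℕ)) :
    Fin.append x y k = y ⟨(k : ℕ) - m, by have := k.isLt; omega⟩ := by
  have hk : Fin.natAdd m ⟨(k : ℕ) - m, by have := k.isLt; omega⟩ = k := by
    ext; simp; omega
  conv_lhs => rw [← hk]
  rw [Fin.append_right]

set_option maxRecDepth 10000 in
set_option maxHeartbeats 1000000 in
/-- Key: product of a strict sum and a weak sum is a `Tm`. -/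
lemma key {R : Type*} [CommRing R] (N m u r : ℕ) (h : m + u = r) (a : ℕ → ℕ → R) :
    strictSum N m 1 a * weakSum N u (m + 1) a = Tm N r m a := by
  subst h
  unfold strictSum weakSum Tm
  rw [Finset.sum_mul_sum, ← Finset.sum_product']
  refine Finset.sum_nbij' (fun p => Fin.append p.1 p.2)
    (fun t => (fun k => t (Fin.castAdd u k), fun k => t (Fin.natAdd m k)))
    ?_ ?_ ?_ ?_ ?_
  · rintro ⟨x, y⟩ hp
    simp only [Finset.mem_product, Finset.mem_filter, Finset.mem_univ, true_and] at hp
    obtain ⟨hx, hy⟩ := hp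
    simp only [Finset.mem_filter, Finset.mem_univ, true_and]
    constructor
    · intro j k hk hjk
      have hj : (j : ℕ) < m := lt_trans hjk hk
      rw [append_apply_lt x y k hk, append_apply_lt x y j hj]
      exact hx ⟨j, hj⟩ ⟨k, hk⟩ hjk
    · intro j k hj hjk
      have hk : m ≤ (k : ℕ) := le_trans hj hjk
      rw [append_apply_ge x y j hj, append_apply_ge x y k hk]
      have := hy (a := ⟨(j : ℕ) - m, by have := j.isLt; omega⟩)
        (b := ⟨(k : ℕ) - m, by have := k.isLt; omega⟩) (show (j : ℕ) - m ≤ (k : ℕ) - m by omega)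
      exact this
  · intro t ht
    simp only [Finset.mem_filter, Finset.mem_univ, true_and] at ht
    obtain ⟨h1, h2⟩ := ht
    simp only [Finset.mem_product, Finset.mem_filter, Finset.mem_univ, true_and]
    constructor
    · intro j k hjk
      exact h1 (Fin.castAdd u j) (Fin.castAdd u k) k.isLt hjk
    · intro j k hjk
      exact h2 (Fin.natAdd m j) (Fin.natAdd m k) (Nat.le_add_right m (j : ℕ))
        (Nat.add_le_add_left hjk m)
  · rintro ⟨x, y⟩ _
    dsimp only
    rw [Prod.mk.injEq]
    exact ⟨funext fun k => Fin.append_left x y k, funext fun k => Fin.append_right x y k⟩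
  · intro t _
    dsimp only
    funext k
    rcases lt_or_ge (k : ℕ) m with h | h
    · exact (append_apply_lt _ _ k h).trans (congrArg t (Fin.ext rfl))
    · exact (append_apply_ge _ _ k h).trans
        (congrArg t (Fin.ext (show m + ((k : ℕ) - m) = (k : ℕ) by omega)))
  · rintro ⟨x, y⟩ _
    dsimp only
    rw [Fin.prod_univ_add]
    congr 1
    · apply Finset.prod_congr rfl
      intro j _
      rw [Fin.append_left]
      simp
    · apply Finset.prod_congr rfl
      intro j _
      rw [Fin.append_right]
      simp only [Fin.coe_natAdd]
      congr 1
      omega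

lemma Pm_gap {N r : ℕ} {t : Fin r → Fin (N + 1)} {m m' : ℕ} (h : Pm m t) (h' : Pm m' t)
    (hmm : m + 2 ≤ m') (hr : m' ≤ r) : False := by
  have hm0 : m < r := by omega
  have hm1 : m + 1 < r := by omega
  have h1 := h'.1 ⟨m, hm0⟩ ⟨m + 1, hm1⟩ (by simp; omega) (by simp [Fin.lt_def])
  have h2 := h.2 ⟨m, hm0⟩ ⟨m + 1, hm1⟩ (by simp) (by simp [Fin.le_def])
  omega

lemma Pm_zero_succ {N r : ℕ} {t : Fin r → Fin (N + 1)} (h : Pm 0 t) : Pm 1 t := by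
  refine ⟨fun j k hk hjk => ?_, fun j k _ hjk => h.2 j k (Nat.zero_le _) hjk⟩
  have := Fin.lt_def.mp hjk
  omega

lemma Pm_top {N r : ℕ} {t : Fin r → Fin (N + 1)} (hr : 1 ≤ r) (h : Pm r t) : Pm (r - 1) t := by
  refine ⟨fun j k hk hjk => h.1 j k (by omega) hjk, fun j k hj hjk => ?_⟩
  have hjk' := Fin.le_def.mp hjk
  have : j = k := Fin.ext (by have := j.isLt; have := k.isLt; omega)
  subst this
  exact le_refl _

lemma Pm_mid {N r : ℕ} {t : Fin r → Fin (N + 1)} {m : ℕ} (h1 : 1 ≤ m) (h2 : m < r)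
    (h : Pm m t) (hnot : ¬ Pm (m + 1) t) : Pm (m - 1) t := by
  have hm1 : m - 1 < r := by omega
  -- from ¬Pm (m+1), deduce t ⟨m-1⟩ ≤ t ⟨m⟩
  have hle : (t ⟨m - 1, hm1⟩ : ℕ) ≤ (t ⟨m, h2⟩ : ℕ) := by
    by_contra hc
    push_neg at hc
    apply hnot
    constructor
    · intro j k hk hjk
      rcases lt_or_ge (k : ℕ) m with hk' | hk'
      · exact h.1 j k hk' hjk
      · have hkm : (k : ℕ) = m := by omega
        have hjm : (j : ℕ) < m := by have := Fin.lt_def.mp hjk; omega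
        have hkk : k = ⟨m, h2⟩ := Fin.ext hkm
        rw [hkk]
        rcases lt_or_ge (j : ℕ) (m - 1) with hj' | hj'
        · have := h.1 j ⟨m - 1, hm1⟩ (show m - 1 < m by omega) (show (j : ℕ) < m - 1 from hj')
          omega
        · have hjj : j = ⟨m - 1, hm1⟩ := Fin.ext (show (j : ℕ) = m - 1 by omega)
          rw [hjj]
          exact hc
    · intro j k hj hjk
      exact h.2 j k (by omega) hjk
  constructor
  · intro j k hk hjk
    exact h.1 j k (by omega) hjk
  · intro j k hj hjk
    rcases lt_or_ge (j : ℕ) m with hj' | hj'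
    · have hjj : j = ⟨m - 1, hm1⟩ := Fin.ext (show (j : ℕ) = m - 1 by omega)
      rcases lt_or_ge (k : ℕ) m with hk' | hk'
      · have : j = k := Fin.ext (by have := Fin.le_def.mp hjk; omega)
        subst this
        exact le_refl _
      · have h3 := h.2 ⟨m, h2⟩ k (le_refl m) (show m ≤ (k : ℕ) from hk')
        rw [hjj]
        omega
    · exact h.2 j k hj' hjk

lemma coeff {R : Type*} [CommRing R] {N r : ℕ} (hr : 1 ≤ r) (t : Fin r → Fin (N + 1)) :
    ∑ m ∈ (Finset.range (r + 1)).filter (fun m => Pm m t), (-1 : R) ^ m = 0 := by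
  apply Finset.sum_involution
    (g := fun m _ => if Pm (m + 1) t ∧ m + 1 ≤ r then m + 1 else m - 1)
  -- f a + f (g a) = 0
  · intro m hm
    simp only [Finset.mem_filter, Finset.mem_range] at hm
    split_ifs with hcond
    · rw [pow_succ]; ring
    · have hm1 : 1 ≤ m := by
        by_contra hc
        push_neg at hc
        interval_cases m
        exact hcond ⟨Pm_zero_succ hm.2, hr⟩
      have hrw : (-1 : R) ^ m = (-1) ^ (m - 1) * (-1) := by
        conv_lhs => rw [show m = m - 1 + 1 by omega]
        rw [pow_succ]
      rw [hrw]
      ring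
  -- g a ≠ a
  · intro m hm _
    split_ifs with hcond
    · omega
    · simp only [Finset.mem_filter, Finset.mem_range] at hm
      have hm1 : 1 ≤ m := by
        by_contra hc
        push_neg at hc
        interval_cases m
        exact hcond ⟨Pm_zero_succ hm.2, hr⟩
      omega
  -- g a ∈ s
  · intro m hm
    simp only [Finset.mem_filter, Finset.mem_range] at hm ⊢
    split_ifs with hcond
    · exact ⟨by omega, hcond.1⟩
    · have hm1 : 1 ≤ m := by
        by_contra hc
        push_neg at hc
        interval_cases m
        exact hcond ⟨Pm_zero_succ hm.2, hr⟩
      rcases Nat.lt_or_ge m r with hmr | hmr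
      · have hnot : ¬ Pm (m + 1) t := fun hp => hcond ⟨hp, by omega⟩
        exact ⟨by omega, Pm_mid hm1 hmr hm.2 hnot⟩
      · have : m = r := by omega
        subst this
        exact ⟨by omega, Pm_top hr hm.2⟩
  -- g (g a) = a
  · intro m hm
    simp only [Finset.mem_filter, Finset.mem_range] at hm
    by_cases hcond : Pm (m + 1) t ∧ m + 1 ≤ r
    · rw [if_pos hcond]
      have hno : ¬ (Pm (m + 1 + 1) t ∧ m + 1 + 1 ≤ r) := by
        rintro ⟨hp, hle⟩
        exact Pm_gap hm.2 hp (by omega) hle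
      rw [if_neg hno]
      omega
    · rw [if_neg hcond]
      have hm1 : 1 ≤ m := by
        by_contra hc
        push_neg at hc
        interval_cases m
        exact hcond ⟨Pm_zero_succ hm.2, hr⟩
      have hrw : m - 1 + 1 = m := by omega
      have hyes : Pm (m - 1 + 1) t ∧ m - 1 + 1 ≤ r := by
        rw [hrw]
        exact ⟨hm.2, by omega⟩
      rw [if_pos hyes]
      omega

lemma altsum {R : Type*} [CommRing R] (N r : ℕ) (hr : 1 ≤ r) (a : ℕ → ℕ → R) :
    ∑ m ∈ Finset.range (r + 1), (-1 : R) ^ m * Tm N r m a = 0 := by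
  have step : ∀ m, (-1 : R) ^ m * Tm N r m a =
      ∑ t : Fin r → Fin (N + 1),
        (if Pm m t then (-1 : R) ^ m else 0) * ∏ j : Fin r, a (1 + (j : ℕ)) ((t j : ℕ)) := by
    intro m
    unfold Tm
    rw [Finset.sum_filter, Finset.mul_sum]
    apply Finset.sum_congr rfl
    intro t _
    split_ifs <;> ring
  calc ∑ m ∈ Finset.range (r + 1), (-1 : R) ^ m * Tm N r m a
      = ∑ m ∈ Finset.range (r + 1), ∑ t : Fin r → Fin (N + 1),
          (if Pm m t then (-1 : R) ^ m else 0) * ∏ j : Fin r, a (1 + (j : ℕ)) ((t j : ℕ)) := by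
        exact Finset.sum_congr rfl fun m _ => step m
    _ = ∑ t : Fin r → Fin (N + 1), ∑ m ∈ Finset.range (r + 1),
          (if Pm m t then (-1 : R) ^ m else 0) * ∏ j : Fin r, a (1 + (j : ℕ)) ((t j : ℕ)) :=
        Finset.sum_comm
    _ = 0 := by
        apply Finset.sum_eq_zero
        intro t _
        rw [← Finset.sum_mul, ← Finset.sum_filter, coeff hr t, zero_mul]

lemma strictSum_zero {R : Type*} [CommRing R] (N off : ℕ) (a : ℕ → ℕ → R) :
    strictSum N 0 off a = 1 := by
  unfold strictSum
  rw [Finset.filter_true_of_mem (fun i _ j k _ => k.elim0)]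
  simp

lemma weakSum_zero {R : Type*} [CommRing R] (N off : ℕ) (a : ℕ → ℕ → R) :
    weakSum N 0 off a = 1 := by
  unfold weakSum
  have hmono : ∀ i : Fin 0 → Fin (N + 1), Monotone i := fun i a => a.elim0
  rw [Finset.filter_true_of_mem fun i _ => hmono i]
  simp

/-- the truncated star/non-star decomposition: for any `N ≥ 0`,
`Σ_{N ≥ i_r ≥ ⋯ ≥ i_1 ≥ 0} a_1(i_1)⋯a_r(i_r)
 = Σ_{ℓ=2}^r (−1)^ℓ (Σ_{N ≥ i_1 > ⋯ > i_{ℓ−1} ≥ 0} a_1(i_1)⋯a_{ℓ−1}(i_{ℓ−1}))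
     ·(Σ_{N ≥ i_r ≥ ⋯ ≥ i_ℓ ≥ 0} a_ℓ(i_ℓ)⋯a_r(i_r))
   + (−1)^{r+1} Σ_{N ≥ i_1 > ⋯ > i_r ≥ 0} a_1(i_1)⋯a_r(i_r)`. -/
theorem stmt5 {R : Type*} [CommRing R] (N r : ℕ) (hr : 1 ≤ r) (a : ℕ → ℕ → R) :
    weakSum N r 1 a =
      ∑ ℓ ∈ Finset.Icc 2 r, (-1 : R) ^ ℓ * strictSum N (ℓ - 1) 1 a * weakSum N (r - ℓ + 1) ℓ a
        + (-1 : R) ^ (r + 1) * strictSum N r 1 a := by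
  obtain ⟨s, rfl⟩ : ∃ s, r = s + 1 := ⟨r - 1, by omega⟩
  have hT := altsum N (s + 1) (by omega) a
  rw [Finset.sum_range_succ, Finset.sum_range_succ'] at hT
  -- rewrite endpoints
  have e0 : weakSum N (s + 1) 1 a = Tm N (s + 1) 0 a := by
    have := key N 0 (s + 1) (s + 1) (by omega) a
    rwa [strictSum_zero, one_mul] at this
  have er : strictSum N (s + 1) 1 a = Tm N (s + 1) (s + 1) a := by
    have := key N (s + 1) 0 (s + 1) (by omega) a
    rwa [weakSum_zero, mul_one] at this
  -- rewrite middle sum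
  have hIcc : Finset.Icc 2 (s + 1) = Finset.Ico 2 (s + 2) := by
    rw [← Finset.Ico_add_one_right_eq_Icc]; rfl
  rw [hIcc, Finset.sum_Ico_eq_sum_range]
  have hcard : s + 2 - 2 = s := by omega
  rw [hcard]
  have emid : ∀ i ∈ Finset.range s,
      (-1 : R) ^ (2 + i) * strictSum N (2 + i - 1) 1 a * weakSum N (s + 1 - (2 + i) + 1) (2 + i) a
        = -((-1 : R) ^ (i + 1) * Tm N (s + 1) (i + 1) a) := by
    intro i hi
    rw [Finset.mem_range] at hi
    have h1 : 2 + i - 1 = i + 1 := by omega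
    have h2 : s + 1 - (2 + i) + 1 = s - i := by omega
    have h3 : 2 + i = (i + 1) + 1 := by omega
    rw [h1, h2, h3]
    have := key N (i + 1) (s - i) (s + 1) (by omega) a
    rw [mul_assoc, this, pow_succ]
    ring
  rw [Finset.sum_congr rfl emid, Finset.sum_neg_distrib, e0, er]
  -- now everything is in terms of Tm; finish linearly using hT
  linear_combination hT
end

section
/- For positive integers s_ℓ,…,s_r, set d_n = s_n + ⋯ + s_r, and let y_i[ℓ m] = (−1)^{m−ℓ} Σ_{0 ≤ i_ℓ ≤ ⋯ ≤ i_{m−1} < i} u_ℓ^{q^{i_ℓ}}⋯u_{m−1}^{q^{i_{m−1}}} / (L_{i_ℓ}^{s_ℓ}⋯L_{i_{m−1}}^{s_{m−1}} L_i^{d_m}) for ℓ < m, and y_i[ℓ ℓ] = 1/L_i^{d_ℓ}. Then as formal power series in u_ℓ,…,u_r (or as finite truncated sums up to i ≤ N), Σ_{i ≥ 0} Σ_{m=ℓ}^{r} y_i[ℓ m] (−1)^{r−m} u_m^{q^i}⋯u_r^{q^i} = (−1)^{r−ℓ} Σ_{0 ≤ i_ℓ ≤ ⋯ ≤ i_r}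 u_ℓ^{q^{i_ℓ}}⋯u_r^{q^{i_r}} / (L_{i_ℓ}^{s_ℓ}⋯L_{i_r}^{s_r}) = (−1)^{r−ℓ} Li*_{(s_r,…,s_ℓ)}(u_r,…,u_ℓ). -/
open scoped Classical

section Aux

lemma fin_filter_lt_card (n t : ℕ) (h : t ≤ n) :
    (Finset.univ.filter fun j : Fin n => (j : ℕ) < t).card = t := by
  have : (Finset.univ.filter fun j : Fin n => (j : ℕ) < t)
      = Finset.map (Fin.castLEEmb h) Finset.univ := by
    ext j
    simp only [Finset.mem_filter, Finset.mem_univ, true_and, Finset.mem_map, Fin.castLEEmb,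
      Function.Embedding.coeFn_mk]
    constructor
    · intro hj; exact ⟨⟨(j : ℕ), hj⟩, Fin.ext rfl⟩
    · rintro ⟨a, rfl⟩; exact a.isLt
  rw [this, Finset.card_map, Finset.card_univ, Fintype.card_fin]

lemma mono_lt_iff {n M : ℕ} (f : Fin (n+1) → Fin (M+1)) (hf : Monotone f) (j : Fin (n+1)) :
    (j : ℕ) < (Finset.univ.filter fun j' => f j' < f (Fin.last n)).card
      ↔ f j < f (Fin.last n) := by
  constructor
  · intro hj
    by_contra hcon
    push_neg at hcon
    have hsub : (Finset.univ.filter fun j' => f j' < f (Fin.last n))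
        ⊆ Finset.univ.filter fun j' : Fin (n+1) => (j' : ℕ) < (j : ℕ) := by
      intro x hx
      simp only [Finset.mem_filter, Finset.mem_univ, true_and] at hx ⊢
      by_contra h'
      push_neg at h'
      exact absurd (lt_of_lt_of_le hx hcon) (not_lt.2 (hf (Fin.le_def.2 h')))
    have hc := Finset.card_le_card hsub
    rw [fin_filter_lt_card _ _ j.isLt.le] at hc
    omega
  · intro hj
    have hsub : (Finset.univ.filter fun j' : Fin (n+1) => (j' : ℕ) < (j : ℕ) + 1)
        ⊆ Finset.univ.filter fun j' => f j' < f (Fin.last n) := by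
      intro x hx
      simp only [Finset.mem_filter, Finset.mem_univ, true_and] at hx ⊢
      exact lt_of_le_of_lt (hf (Fin.le_def.2 (Nat.lt_succ_iff.1 hx))) hj
    have hc := Finset.card_le_card hsub
    rw [fin_filter_lt_card _ _ (by omega : (j : ℕ) + 1 ≤ n + 1)] at hc
    omega

lemma mono_card_le {n M : ℕ} (f : Fin (n+1) → Fin (M+1)) :
    (Finset.univ.filter fun j' => f j' < f (Fin.last n)).card ≤ n := by
  have hsub : (Finset.univ.filter fun j' => f j' < f (Fin.last n))
      ⊆ Finset.univ.erase (Fin.last n) := by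
    intro x hx
    simp only [Finset.mem_filter, Finset.mem_univ, true_and] at hx
    refine Finset.mem_erase.2 ⟨fun h => ?_, Finset.mem_univ _⟩
    subst h; exact lt_irrefl _ hx
  have := Finset.card_le_card hsub
  rwa [Finset.card_erase_of_mem (Finset.mem_univ _), Finset.card_univ, Fintype.card_fin,
    Nat.add_sub_cancel] at this

/-- the forward map of the reindexing bijection -/
noncomputable def toF (n' N : ℕ) (a : Σ i : ℕ, Σ t : ℕ, (Fin t → Fin i)) (j : Fin (n'+1)) :
    Fin (N+1) :=
  if h : (j : ℕ) < a.2.1 then ⟨(a.2.2 ⟨(j : ℕ), h⟩ : ℕ) % (N+1), Nat.mod_lt _ (Nat.succ_pos N)⟩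
  else ⟨a.1 % (N+1), Nat.mod_lt _ (Nat.succ_pos N)⟩

/-- the inverse map of the reindexing bijection -/
noncomputable def invF (n' N : ℕ) (f : Fin (n'+1) → Fin (N+1)) :
    Σ i : ℕ, Σ t : ℕ, (Fin t → Fin i) :=
  ⟨(f (Fin.last n') : ℕ),
   (Finset.univ.filter fun j => f j < f (Fin.last n')).card,
   fun j => ⟨(f ⟨(j : ℕ), by
      have h1 := j.isLt
      have h2 := Finset.card_filter_le Finset.univ (fun j => f j < f (Fin.last n'))
      rw [Finset.card_univ, Fintype.card_fin] at h2
      omega⟩ : ℕ) % ((f (Fin.last n') : ℕ)), by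
    refine Nat.mod_lt _ ?_
    have hpos : 0 < (Finset.univ.filter fun j => f j < f (Fin.last n')).card :=
      lt_of_le_of_lt (Nat.zero_le _) j.isLt
    obtain ⟨x, hx⟩ := Finset.card_pos.mp hpos
    simp only [Finset.mem_filter, Finset.mem_univ, true_and, Fin.lt_def] at hx
    omega⟩⟩

lemma sigma_eq_of (a b : Σ i : ℕ, Σ t : ℕ, (Fin t → Fin i)) (h1 : a.1 = b.1)
    (h2 : a.2.1 = b.2.1)
    (h3 : ∀ (j : ℕ) (hj : j < a.2.1) (hj' : j < b.2.1),
      (a.2.2 ⟨j, hj⟩ : ℕ) = (b.2.2 ⟨j, hj'⟩ : ℕ)) : a = b := by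
  obtain ⟨i, t, g⟩ := a
  obtain ⟨i', t', g'⟩ := b
  dsimp at h1 h2 h3
  subst h1; subst h2
  have : g = g' := funext fun j => Fin.ext (h3 j j.isLt j.isLt)
  rw [this]

end Aux

lemma toF_val_lt (n' N i t : ℕ) (g : Fin t → Fin i) (hi : i ≤ N) (x : Fin (n'+1))
    (hx : (x : ℕ) < t) : ((toF n' N ⟨i, t, g⟩ x) : ℕ) = (g ⟨(x : ℕ), hx⟩ : ℕ) := by
  simp only [toF, dif_pos hx]
  exact Nat.mod_eq_of_lt (by have := (g ⟨(x : ℕ), hx⟩).isLt; omega)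

lemma toF_val_ge (n' N i t : ℕ) (g : Fin t → Fin i) (hi : i ≤ N) (x : Fin (n'+1))
    (hx : ¬ (x : ℕ) < t) : ((toF n' N ⟨i, t, g⟩ x) : ℕ) = i := by
  simp only [toF, dif_neg hx]
  exact Nat.mod_eq_of_lt (by omega)

lemma invF_card (n' N : ℕ) (f : Fin (n'+1) → Fin (N+1)) :
    (invF n' N f).2.1 = (Finset.univ.filter fun j => f j < f (Fin.last n')).card := rfl

lemma invF_fst (n' N : ℕ) (f : Fin (n'+1) → Fin (N+1)) :
    (invF n' N f).1 = (f (Fin.last n') : ℕ) := rfl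

lemma invF_val {n' N : ℕ} (f : Fin (n'+1) → Fin (N+1)) (hf : Monotone f)
    (x : ℕ) (hx : x < (invF n' N f).2.1) (hx' : x < n'+1) :
    ((invF n' N f).2.2 ⟨x, hx⟩ : ℕ) = (f ⟨x, hx'⟩ : ℕ) := by
  have hlt : f ⟨x, hx'⟩ < f (Fin.last n') := (mono_lt_iff f hf ⟨x, hx'⟩).1 hx
  show ((f ⟨x, _⟩ : ℕ) % ((f (Fin.last n') : ℕ))) = _
  exact Nat.mod_eq_of_lt (Fin.lt_def.1 hlt)

lemma core {K : Type*} [Field K] (T : ℕ → ℕ → K) (n' N : ℕ) :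
    ∑ i ∈ Finset.range (N+1), ∑ t ∈ Finset.range (n'+1),
      (∑ g ∈ Finset.univ.filter (fun g : Fin t → Fin i => Monotone g),
        ∏ j : Fin t, T (j : ℕ) ((g j : ℕ))) * ∏ e ∈ Finset.Icc t n', T e i
    = ∑ f ∈ Finset.univ.filter (fun f : Fin (n'+1) → Fin (N+1) => Monotone f),
        ∏ j : Fin (n'+1), T (j : ℕ) ((f j : ℕ)) := by
  simp only [Finset.sum_mul]
  have h1 : ∀ i ∈ Finset.range (N+1),
      (∑ t ∈ Finset.range (n'+1), ∑ g ∈ Finset.univ.filter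
          (fun g : Fin t → Fin i => Monotone g),
        (∏ j : Fin t, T (j : ℕ) ((g j : ℕ))) * ∏ e ∈ Finset.Icc t n', T e i)
      = ∑ p ∈ (Finset.range (n'+1)).sigma (fun t => Finset.univ.filter
          (fun g : Fin t → Fin i => Monotone g)),
        (∏ j : Fin p.1, T (j : ℕ) ((p.2 j : ℕ))) * ∏ e ∈ Finset.Icc p.1 n', T e i :=
    fun i _ => Finset.sum_sigma' _ _ _
  rw [Finset.sum_congr rfl h1, Finset.sum_sigma']
  have toF_mono : ∀ (i t : ℕ) (g : Fin t → Fin i), i ≤ N → t ≤ n' → Monotone g →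
      Monotone (toF n' N ⟨i, t, g⟩) := by
    intro i t g hi' ht' hg x y hxy
    rw [Fin.le_def]
    by_cases hx : (x : ℕ) < t
    · by_cases hy : (y : ℕ) < t
      · rw [toF_val_lt n' N i t g hi' x hx, toF_val_lt n' N i t g hi' y hy]
        exact Fin.le_def.1 (hg (show (⟨(x:ℕ), hx⟩ : Fin t) ≤ ⟨(y:ℕ), hy⟩ from
          Fin.le_def.2 (Fin.le_def.1 hxy)))
      · rw [toF_val_lt n' N i t g hi' x hx, toF_val_ge n' N i t g hi' y hy]
        exact le_of_lt (g ⟨(x:ℕ), hx⟩).isLt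
    · have hy : ¬ (y : ℕ) < t := fun hy => hx (lt_of_le_of_lt (Fin.le_def.1 hxy) hy)
      rw [toF_val_ge n' N i t g hi' x hx, toF_val_ge n' N i t g hi' y hy]
  refine Finset.sum_nbij' (toF n' N) (invF n' N) ?_ ?_ ?_ ?_ ?_
  · -- toF lands in monotone functions
    rintro ⟨i, t, g⟩ ha
    simp only [Finset.mem_sigma, Finset.mem_range, Finset.mem_filter, Finset.mem_univ,
      true_and] at ha
    obtain ⟨hi, ht, hg⟩ := ha
    simp only [Finset.mem_filter, Finset.mem_univ, true_and]
    exact toF_mono i t g (by omega) (by omega) hg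
  · -- invF lands in the sigma set
    intro f hf
    simp only [Finset.mem_filter, Finset.mem_univ, true_and] at hf
    simp only [Finset.mem_sigma, Finset.mem_range, Finset.mem_filter, Finset.mem_univ, true_and]
    refine ⟨(f (Fin.last n')).isLt, ?_, ?_⟩
    · rw [invF_card]; exact Nat.lt_succ_of_le (mono_card_le f)
    · intro x y hxy
      rw [Fin.le_def]
      have hcard : (invF n' N f).2.1 ≤ n' := by rw [invF_card]; exact mono_card_le f
      have hx' : (x : ℕ) < n' + 1 := by have := x.isLt; omega
      have hy' : (y : ℕ) < n' + 1 := by have := y.isLt; omega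
      have ex : x = ⟨(x : ℕ), x.isLt⟩ := rfl
      have ey : y = ⟨(y : ℕ), y.isLt⟩ := rfl
      rw [ex, ey, invF_val f hf _ x.isLt hx', invF_val f hf _ y.isLt hy']
      exact Fin.le_def.1 (hf (Fin.le_def.2 (Fin.le_def.1 hxy)))
  · -- left inverse
    rintro ⟨i, t, g⟩ ha
    simp only [Finset.mem_sigma, Finset.mem_range, Finset.mem_filter, Finset.mem_univ,
      true_and] at ha
    obtain ⟨hi, ht, hg⟩ := ha
    have hi' : i ≤ N := by omega
    have ht' : t ≤ n' := by omega
    set F := toF n' N ⟨i, t, g⟩ with hF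
    have hFmono : Monotone F := toF_mono i t g hi' ht' hg
    have hlastval : (F (Fin.last n') : ℕ) = i :=
      toF_val_ge n' N i t g hi' (Fin.last n') (by simp only [Fin.val_last]; omega)
    have hfilter : (Finset.univ.filter fun j => F j < F (Fin.last n'))
        = Finset.univ.filter fun j : Fin (n'+1) => (j : ℕ) < t := by
      ext x
      simp only [Finset.mem_filter, Finset.mem_univ, true_and, Fin.lt_def, hlastval]
      by_cases hx : (x : ℕ) < t
      · rw [toF_val_lt n' N i t g hi' x hx]
        exact ⟨fun _ => hx, fun _ => (g ⟨(x:ℕ), hx⟩).isLt⟩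
      · rw [toF_val_ge n' N i t g hi' x hx]
        simp [hx]
    have hcard : (invF n' N F).2.1 = t := by
      rw [invF_card, hfilter, fin_filter_lt_card _ _ (by omega)]
    refine sigma_eq_of _ _ ?_ hcard ?_
    · rw [invF_fst, hlastval]
    · intro j hj hj'
      have hjn : j < n' + 1 := by have := hcard ▸ hj; omega
      rw [invF_val F hFmono j hj hjn]
      exact toF_val_lt n' N i t g hi' ⟨j, hjn⟩ hj'
  · -- right inverse
    intro f hf
    simp only [Finset.mem_filter, Finset.mem_univ, true_and] at hf
    have hiN : (invF n' N f).1 ≤ N := by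
      rw [invF_fst]; exact Nat.lt_succ_iff.1 (f (Fin.last n')).isLt
    funext x
    apply Fin.ext
    by_cases hx : (x : ℕ) < (invF n' N f).2.1
    · rw [toF_val_lt n' N _ _ _ hiN x hx]
      have ex : x = ⟨(x : ℕ), x.isLt⟩ := rfl
      rw [invF_val f hf _ hx x.isLt]
    · rw [toF_val_ge n' N _ _ _ hiN x hx, invF_fst]
      have h1 : ¬ f x < f (Fin.last n') := fun hcon => hx ((mono_lt_iff f hf x).2 hcon)
      have h2 : f x ≤ f (Fin.last n') := hf (Fin.le_last x)
      exact (congrArg Fin.val (le_antisymm h2 (not_lt.1 h1))).symm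
  · -- term equality
    rintro ⟨i, t, g⟩ ha
    simp only [Finset.mem_sigma, Finset.mem_range, Finset.mem_filter, Finset.mem_univ,
      true_and] at ha
    obtain ⟨hi, ht, hg⟩ := ha
    have hi' : i ≤ N := by omega
    have ht' : t ≤ n' := by omega
    set v : ℕ → ℕ := fun j => if h : j < t then (g ⟨j, h⟩ : ℕ) else i with hv
    have hval : ∀ x : Fin (n'+1), ((toF n' N ⟨i, t, g⟩ x) : ℕ) = v (x : ℕ) := by
      intro x
      by_cases hx : (x : ℕ) < t
      · rw [toF_val_lt n' N i t g hi' x hx]; simp [hv, hx]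
      · rw [toF_val_ge n' N i t g hi' x hx]; simp [hv, hx]
    have hrhs : (∏ j : Fin (n'+1), T (j : ℕ) ((toF n' N ⟨i, t, g⟩ j : ℕ)))
        = ∏ j ∈ Finset.range (n'+1), T j (v j) := by
      rw [← Fin.prod_univ_eq_prod_range (fun j => T j (v j)) (n'+1)]
      exact Finset.prod_congr rfl fun x _ => by rw [hval x]
    have hsplit : (∏ j ∈ Finset.range (n'+1), T j (v j))
        = (∏ j ∈ Finset.Ico 0 t, T j (v j)) * ∏ j ∈ Finset.Ico t (n'+1), T j (v j) := by
      rw [Finset.prod_Ico_consecutive _ (Nat.zero_le t) (by omega), ← Finset.range_eq_Ico]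
    have h1' : (∏ j ∈ Finset.Ico 0 t, T j (v j)) = ∏ j : Fin t, T (j : ℕ) ((g j : ℕ)) := by
      rw [← Finset.range_eq_Ico, ← Fin.prod_univ_eq_prod_range (fun j => T j (v j)) t]
      refine Finset.prod_congr rfl fun x _ => ?_
      have hvx : v (x : ℕ) = (g x : ℕ) := by simp [hv, x.isLt]
      rw [hvx]
    have h2' : (∏ j ∈ Finset.Ico t (n'+1), T j (v j)) = ∏ e ∈ Finset.Icc t n', T e i := by
      rw [Finset.Ico_add_one_right_eq_Icc]
      refine Finset.prod_congr rfl fun e he => ?_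
      have hnot : ¬ e < t := by rw [Finset.mem_Icc] at he; omega
      simp [hv, hnot]
    show _ = ∏ j : Fin (n'+1), T (j : ℕ) ((toF n' N ⟨i, t, g⟩ j : ℕ))
    rw [hrhs, hsplit, h1', h2']


/-- The explicit entries `y_i[ℓ m] = (−1)^(m−ℓ) Σ_{0 ≤ i_ℓ ≤ ⋯ ≤ i_{m−1} < i}
`u_ℓ^{q^{i_ℓ}}⋯u_{m−1}^{q^{i_{m−1}}}/(L_{i_ℓ}^{s_ℓ}⋯L_{i_{m−1}}^{s_{m−1}} L_i^{d_m})`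
(for `m = ℓ` this is `1/L_i^{d_ℓ}`). -/
noncomputable def yform {K : Type*} [Field K] (q : ℕ) (L : ℕ → K) (s d : ℕ → ℕ)
    (u : ℕ → K) (ℓ i m : ℕ) : K :=
  (-1 : K) ^ (m - ℓ) *
    (∑ f ∈ Finset.univ.filter (fun f : Fin (m - ℓ) → Fin i => Monotone f),
      ∏ j : Fin (m - ℓ),
        u (ℓ + (j : ℕ)) ^ q ^ ((f j : ℕ)) * (L ((f j : ℕ)) ^ s (ℓ + (j : ℕ)))⁻¹) *
    (L i ^ d m)⁻¹

/-- (truncated form) the reindexing identity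
`Σ_{i} Σ_{m=ℓ}^{r} y_i[ℓ m](−1)^{r−m} u_m^{q^i}⋯u_r^{q^i}
 = (−1)^{r−ℓ} Σ_{0 ≤ i_ℓ ≤ ⋯ ≤ i_r} u_ℓ^{q^{i_ℓ}}⋯u_r^{q^{i_r}}/(L_{i_ℓ}^{s_ℓ}⋯L_{i_r}^{s_r})
 = (−1)^{r−ℓ} Li*_{(s_r,…,s_ℓ)}(u_r,…,u_ℓ)` (all indices truncated at `N`). -/
theorem stmt10 {K : Type*} [Field K] (q : ℕ) (hq : 2 ≤ q) (th : K) (L : ℕ → K)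
    (hL0 : L 0 = 1) (hLrec : ∀ i, L (i + 1) = (th - th ^ q ^ (i + 1)) * L i)
    (hL : ∀ i, L i ≠ 0) (r ℓ : ℕ) (hℓ : 1 ≤ ℓ) (hlr : ℓ ≤ r)
    (s : ℕ → ℕ) (hs : ∀ n, 0 < s n) (d : ℕ → ℕ)
    (hd : ∀ n, d n = ∑ e ∈ Finset.Icc n r, s e) (u : ℕ → K) (N : ℕ) :
    ∑ i ∈ Finset.range (N + 1), ∑ m ∈ Finset.Icc ℓ r,
        yform q L s d u ℓ i m * (-1 : K) ^ (r - m) * ∏ e ∈ Finset.Icc m r, u e ^ q ^ i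
      = (-1 : K) ^ (r - ℓ) *
        ∑ f ∈ Finset.univ.filter (fun f : Fin (r - ℓ + 1) → Fin (N + 1) => Monotone f),
          ∏ j : Fin (r - ℓ + 1),
            u (ℓ + (j : ℕ)) ^ q ^ ((f j : ℕ)) * (L ((f j : ℕ)) ^ s (ℓ + (j : ℕ)))⁻¹ := by
  obtain ⟨n', rfl⟩ : ∃ n', r = ℓ + n' := ⟨r - ℓ, by omega⟩
  rw [show ℓ + n' - ℓ = n' from by omega]
  have hIcc : Finset.Icc ℓ (ℓ + n') = Finset.map (addLeftEmbedding ℓ) (Finset.range (n' + 1)) := by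
    rw [show Finset.range (n' + 1) = Finset.Icc 0 n' from by ext x; simp [Nat.lt_succ_iff],
      Finset.map_add_left_Icc, add_zero]
  have key : ∀ i ∈ Finset.range (N + 1), ∀ t ∈ Finset.range (n' + 1),
      yform q L s d u ℓ i (ℓ + t) * (-1 : K) ^ (ℓ + n' - (ℓ + t)) *
          ∏ e ∈ Finset.Icc (ℓ + t) (ℓ + n'), u e ^ q ^ i
        = (-1 : K) ^ n' *
          ((∑ g ∈ Finset.univ.filter (fun g : Fin t → Fin i => Monotone g),
              ∏ j : Fin t, u (ℓ + (j : ℕ)) ^ q ^ ((g j : ℕ)) * (L ((g j : ℕ)) ^ s (ℓ + (j : ℕ)))⁻¹) *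
            ∏ e ∈ Finset.Icc t n', (u (ℓ + e) ^ q ^ i * (L i ^ s (ℓ + e))⁻¹)) := by
    intro i hi t ht
    rw [Finset.mem_range] at ht
    simp only [yform]
    rw [show ℓ + t - ℓ = t from by omega,
      show ℓ + n' - (ℓ + t) = n' - t from by omega, hd (ℓ + t),
      ← Finset.map_add_left_Icc t n' ℓ, Finset.sum_map, Finset.prod_map]
    simp only [addLeftEmbedding_apply]
    rw [← Finset.prod_pow_eq_pow_sum, ← Finset.prod_inv_distrib, Finset.prod_mul_distrib,
      show ((-1 : K)) ^ n' = (-1 : K) ^ t * (-1 : K) ^ (n' - t) from by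
        rw [← pow_add]; congr 1; omega]
    ring
  calc ∑ i ∈ Finset.range (N + 1), ∑ m ∈ Finset.Icc ℓ (ℓ + n'),
        yform q L s d u ℓ i m * (-1 : K) ^ (ℓ + n' - m) * ∏ e ∈ Finset.Icc m (ℓ + n'), u e ^ q ^ i
      = ∑ i ∈ Finset.range (N + 1), ∑ t ∈ Finset.range (n' + 1),
          yform q L s d u ℓ i (ℓ + t) * (-1 : K) ^ (ℓ + n' - (ℓ + t)) *
            ∏ e ∈ Finset.Icc (ℓ + t) (ℓ + n'), u e ^ q ^ i := by
        refine Finset.sum_congr rfl fun i _ => ?_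
        rw [hIcc, Finset.sum_map]
        simp only [addLeftEmbedding_apply]
    _ = ∑ i ∈ Finset.range (N + 1), ∑ t ∈ Finset.range (n' + 1),
          (-1 : K) ^ n' *
          ((∑ g ∈ Finset.univ.filter (fun g : Fin t → Fin i => Monotone g),
              ∏ j : Fin t, u (ℓ + (j : ℕ)) ^ q ^ ((g j : ℕ)) * (L ((g j : ℕ)) ^ s (ℓ + (j : ℕ)))⁻¹) *
            ∏ e ∈ Finset.Icc t n', (u (ℓ + e) ^ q ^ i * (L i ^ s (ℓ + e))⁻¹)) :=
        Finset.sum_congr rfl fun i hi => Finset.sum_congr rfl fun t ht => key i hi t ht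
    _ = (-1 : K) ^ n' * ∑ i ∈ Finset.range (N + 1), ∑ t ∈ Finset.range (n' + 1),
          ((∑ g ∈ Finset.univ.filter (fun g : Fin t → Fin i => Monotone g),
              ∏ j : Fin t, u (ℓ + (j : ℕ)) ^ q ^ ((g j : ℕ)) * (L ((g j : ℕ)) ^ s (ℓ + (j : ℕ)))⁻¹) *
            ∏ e ∈ Finset.Icc t n', (u (ℓ + e) ^ q ^ i * (L i ^ s (ℓ + e))⁻¹)) := by
        rw [Finset.mul_sum]
        exact Finset.sum_congr rfl fun i _ => (Finset.mul_sum _ _ _).symm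
    _ = (-1 : K) ^ n' *
        ∑ f ∈ Finset.univ.filter (fun f : Fin (n' + 1) → Fin (N + 1) => Monotone f),
          ∏ j : Fin (n' + 1),
            u (ℓ + (j : ℕ)) ^ q ^ ((f j : ℕ)) * (L ((f j : ℕ)) ^ s (ℓ + (j : ℕ)))⁻¹ := by
        rw [core (fun a k => u (ℓ + a) ^ q ^ k * (L k ^ s (ℓ + a))⁻¹) n' N]
end

section
/- Assume the identity Li*_{(s_r,…,s_1)}(u_r,…,u_1) = Σ_{ℓ=2}^{r} (−1)^ℓ Li_{(s_1,…,s_{ℓ−1})}(u_1,…,u_{ℓ−1})·Li*_{(s_r,…,s_ℓ)}(u_r,…,u_ℓ) + (−1)^{r+1} Li_{(s_1,…,s_r)}(u_1,…,u_r) holds for all r' ≤ r (for the corresponding truncated tuples). Then the simultaneous vanishing Li_{(s_ℓ,…,s_r)}(u_ℓ,…,u_r) = 0 for all 1 ≤ ℓ ≤ r is equivalent to the simultaneous vanishing Li*_{(s_r,…,s_ℓ)}(u_r,…,u_ℓ) = 0 for all 1 ≤ ℓ ≤ r. -/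
/-- assuming the star/non-star decomposition for every suffix tuple
(`Li a b` stands for `Li_{(s_a,…,s_b)}(u_a,…,u_b)` and `LiS a b` for
`Li*_{(s_b,…,s_a)}(u_b,…,u_a)`), the simultaneous vanishing of the
`Li ℓ r` for `1 ≤ ℓ ≤ r` is equivalent to the simultaneous vanishing of the
`LiS ℓ r` for `1 ≤ ℓ ≤ r`. -/
theorem stmt17 {R : Type*} [CommRing R] (r : ℕ) (hr : 1 ≤ r)
    (Li LiS : ℕ → ℕ → R)
    (hdec : ∀ a, 1 ≤ a → a ≤ r →
      LiS a r = ∑ m ∈ Finset.Icc (a + 1) r, (-1 : R) ^ (m - a + 1) * Li a (m - 1) * LiS m r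
        + (-1 : R) ^ (r - a) * Li a r) :
    (∀ ℓ, 1 ≤ ℓ → ℓ ≤ r → Li ℓ r = 0) ↔ (∀ ℓ, 1 ≤ ℓ → ℓ ≤ r → LiS ℓ r = 0) := by
  constructor
  · intro h
    have key : ∀ k a, 1 ≤ a → a ≤ r → r - a = k → LiS a r = 0 := by
      intro k
      induction k using Nat.strong_induction_on with
      | _ k ih =>
        intro a ha har hk
        rw [hdec a ha har, h a ha har, mul_zero, add_zero]
        apply Finset.sum_eq_zero
        intro m hm
        obtain ⟨hm1, hm2⟩ := Finset.mem_Icc.mp hm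
        have : LiS m r = 0 := ih (r - m) (by omega) m (by omega) hm2 rfl
        rw [this, mul_zero]
    intro ℓ h1 h2
    exact key (r - ℓ) ℓ h1 h2 rfl
  · intro h ℓ h1 h2
    have hd := hdec ℓ h1 h2
    rw [h ℓ h1 h2] at hd
    have hs : ∑ m ∈ Finset.Icc (ℓ + 1) r,
        (-1 : R) ^ (m - ℓ + 1) * Li ℓ (m - 1) * LiS m r = 0 := by
      apply Finset.sum_eq_zero
      intro m hm
      obtain ⟨hm1, hm2⟩ := Finset.mem_Icc.mp hm
      rw [h m (by omega) hm2, mul_zero]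
    rw [hs, zero_add] at hd
    have h2' : (-1 : R) ^ (r - ℓ) * ((-1 : R) ^ (r - ℓ) * Li ℓ r) = 0 := by
      rw [← hd, mul_zero]
    rwa [← mul_assoc, ← pow_add, Even.neg_one_pow ⟨r - ℓ, by ring⟩, one_mul] at h2'
end
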